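/- Let 0 < δ < r ≤ 1/2 and let Δ be the isosceles triangle with apex at the origin O, base a unit segment at distance δ from O (perpendicular bisector through O). Then the area of the part of Δ outside the open disk B_r of radius r centered at O equals (1/2)δ − ( δ·√(r²−δ²) + (arcsin(δ/r) − arctan(2δ))·r² ). -/

import Mathlib

open MeasureTheory Metric Set

/-- A point of the Euclidean plane with given coordinates. -/
noncomputable def pt (x y : ℝ) : EuclideanSpace ℝ (Fin 2) :=
  (WithLp.equiv 2 (Fin 2 → ℝ)).symm ![x, y]

lemma pt0 (x y : ℝ) : pt x y 0 = x := by simp [pt]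
lemma pt1 (x y : ℝ) : pt x y 1 = y := by simp [pt]

lemma hull_eq (δ : ℝ) (hδ : 0 < δ) :
    convexHull ℝ {pt (-(1 / 2)) δ, pt (1 / 2) δ, (0 : EuclideanSpace ℝ (Fin 2))} =
      {p : EuclideanSpace ℝ (Fin 2) | 2 * δ * |p 0| ≤ p 1 ∧ p 1 ≤ δ} := by
  apply le_antisymm
  · apply convexHull_min
    · rintro p (rfl | rfl | rfl) <;>
        simp [pt0, pt1, abs_of_nonpos, abs_of_nonneg, hδ.le] <;> nlinarith
    · have h1 : Convex ℝ {p : EuclideanSpace ℝ (Fin 2) | 2 * δ * p 0 - p 1 ≤ 0} := by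
        apply convex_halfSpace_le
        exact ⟨fun a b => by simp; ring, fun c a => by simp; ring⟩
      have h2 : Convex ℝ {p : EuclideanSpace ℝ (Fin 2) | -(2 * δ) * p 0 - p 1 ≤ 0} := by
        apply convex_halfSpace_le
        exact ⟨fun a b => by simp; ring, fun c a => by simp; ring⟩
      have h3 : Convex ℝ {p : EuclideanSpace ℝ (Fin 2) | p 1 ≤ δ} := by
        apply convex_halfSpace_le
        exact ⟨fun a b => by simp, fun c a => by simp⟩
      have : {p : EuclideanSpace ℝ (Fin 2) | 2 * δ * |p 0| ≤ p 1 ∧ p 1 ≤ δ} =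
          ({p : EuclideanSpace ℝ (Fin 2) | 2 * δ * p 0 - p 1 ≤ 0} ∩
            {p | -(2 * δ) * p 0 - p 1 ≤ 0}) ∩ {p | p 1 ≤ δ} := by
        ext p
        simp only [mem_setOf_eq, mem_inter_iff]
        constructor
        · rintro ⟨ha, hb⟩
          refine ⟨⟨?_, ?_⟩, hb⟩ <;>
            nlinarith [le_abs_self (p 0), neg_abs_le (p 0)]
        · rintro ⟨⟨ha, hb⟩, hc⟩
          refine ⟨?_, hc⟩
          rcases abs_cases (p 0) with ⟨he, _⟩ | ⟨he, _⟩ <;> nlinarith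
      rw [this]
      exact (h1.inter h2).inter h3
  · rintro p ⟨h1, h2⟩
    have hp1 : 0 ≤ p 1 := le_trans (by positivity) h1
    rcases eq_or_lt_of_le hp1 with h0 | h0
    · have : p = 0 := by
        ext i; fin_cases i
        · simp only []
          have : |p 0| = 0 := by nlinarith [abs_nonneg (p 0)]
          simpa [abs_eq_zero] using this
        · simpa using h0.symm
      rw [this]
      exact subset_convexHull ℝ _ (by simp)
    · obtain ⟨q, hq⟩ : ∃ q : EuclideanSpace ℝ (Fin 2), q = (δ / p 1) • p := ⟨_, rfl⟩
      have hq0 : q 0 = δ * p 0 / p 1 := by simp [hq]; ring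
      have hq1 : q 1 = δ := by simp [hq]; field_simp
      have hqseg : q ∈ segment ℝ (pt (-(1 / 2)) δ) (pt (1 / 2) δ) := by
        refine ⟨1/2 - q 0, 1/2 + q 0, ?_, ?_, by ring, ?_⟩
        · rw [hq0, sub_nonneg, div_le_iff₀ h0]
          nlinarith [le_abs_self (p 0)]
        · have : -(1/2 : ℝ) ≤ δ * p 0 / p 1 := by
            rw [le_div_iff₀ h0]; nlinarith [neg_abs_le (p 0)]
          rw [hq0]; linarith
        · ext i; fin_cases i
          · show (1/2 - q 0) * pt (-(1/2)) δ 0 + (1/2 + q 0) * pt (1/2) δ 0 = q 0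
            rw [pt0, pt0]; ring
          · show (1/2 - q 0) * pt (-(1/2)) δ 1 + (1/2 + q 0) * pt (1/2) δ 1 = q 1
            rw [pt1, pt1, hq1]; ring
      have hA : pt (-(1 / 2)) δ ∈ convexHull ℝ {pt (-(1 / 2)) δ, pt (1 / 2) δ, (0 : EuclideanSpace ℝ (Fin 2))} :=
        subset_convexHull ℝ _ (by simp)
      have hB : pt (1 / 2) δ ∈ convexHull ℝ {pt (-(1 / 2)) δ, pt (1 / 2) δ, (0 : EuclideanSpace ℝ (Fin 2))} :=
        subset_convexHull ℝ _ (by simp)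
      have hO : (0 : EuclideanSpace ℝ (Fin 2)) ∈ convexHull ℝ {pt (-(1 / 2)) δ, pt (1 / 2) δ, (0 : EuclideanSpace ℝ (Fin 2))} :=
        subset_convexHull ℝ _ (by simp)
      have hqmem := (convex_convexHull ℝ _).segment_subset hA hB hqseg
      have : p ∈ segment ℝ (0 : EuclideanSpace ℝ (Fin 2)) q := by
        refine ⟨1 - p 1 / δ, p 1 / δ, ?_, by positivity, by ring, ?_⟩
        · rw [sub_nonneg, div_le_one hδ]; exact h2
        · rw [hq, smul_smul, smul_zero, zero_add,
            show p 1 / δ * (δ / p 1) = 1 by field_simp]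
          simp
      exact (convex_convexHull ℝ _).segment_subset hO hqmem this

lemma pointwise_iff (r δ x y : ℝ) (hδ : 0 < δ) (hδr : δ < r) (hr : r ≤ 1/2) :
    ((2*δ*|x| ≤ y ∧ y ≤ δ) ∧ ¬(x^2 + y^2 < r^2)) ↔
      (y ∈ Icc (2*δ*r/Real.sqrt (1+4*δ^2)) δ ∧
        ((x ∈ Icc (Real.sqrt (r^2-y^2)) (y/(2*δ))) ∨
         (x ∈ Icc (-(y/(2*δ))) (-(Real.sqrt (r^2-y^2)))))) := by
  have hr0 : (0:ℝ) < r := hδ.trans hδr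
  have hs0 : 0 < Real.sqrt (1+4*δ^2) := Real.sqrt_pos.mpr (by positivity)
  have hs2 : Real.sqrt (1+4*δ^2)^2 = 1+4*δ^2 := Real.sq_sqrt (by positivity)
  set s := Real.sqrt (1+4*δ^2)
  set y0 := 2*δ*r/s with hy0_def
  have hy00 : 0 < y0 := by positivity
  have hy02 : y0^2 * s^2 = 4*δ^2*r^2 := by rw [hy0_def]; field_simp; ring
  constructor
  · rintro ⟨⟨h1, h2⟩, h3⟩
    push_neg at h3
    have hy0 : 0 ≤ y := le_trans (by positivity) h1
    have hyr : y < r := lt_of_le_of_lt h2 hδr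
    have hxx : |x| ≤ y/(2*δ) := by rw [le_div_iff₀ (by positivity)]; linarith [h1]
    have hx2 : x^2 * (4*δ^2) ≤ y^2 := by
      nlinarith [mul_le_mul h1 h1 (by positivity : (0:ℝ) ≤ 2*δ*|x|) hy0, sq_abs x]
    have hyy0 : y0 ≤ y := by
      have hsq : y0^2 ≤ y^2 := by nlinarith [hy02, hs2, hx2, h3]
      calc y0 = Real.sqrt (y0^2) := (Real.sqrt_sq hy00.le).symm
        _ ≤ Real.sqrt (y^2) := Real.sqrt_le_sqrt hsq
        _ = y := Real.sqrt_sq hy0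
    have hfx : Real.sqrt (r^2-y^2) ≤ |x| :=
      Real.sqrt_le_iff.mpr ⟨abs_nonneg x, by nlinarith [sq_abs x]⟩
    refine ⟨⟨hyy0, h2⟩, ?_⟩
    rcases le_or_gt 0 x with hx | hx
    · left; rw [abs_of_nonneg hx] at hfx hxx; exact ⟨hfx, hxx⟩
    · right
      rw [abs_of_neg hx] at hfx hxx
      exact ⟨by linarith, by linarith⟩
  · rintro ⟨⟨hyy0, hyδ⟩, hcase⟩
    have hy0 : 0 ≤ y := le_trans hy00.le hyy0
    have hyr : y < r := lt_of_le_of_lt hyδ hδr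
    have hrysq : Real.sqrt (r^2-y^2)^2 = r^2 - y^2 := Real.sq_sqrt (by nlinarith)
    have hfnn : 0 ≤ Real.sqrt (r^2-y^2) := Real.sqrt_nonneg _
    rcases hcase with ⟨ha, hb⟩ | ⟨ha, hb⟩
    · have hxnn : 0 ≤ x := le_trans hfnn ha
      refine ⟨⟨?_, hyδ⟩, ?_⟩
      · rw [abs_of_nonneg hxnn]
        have := (le_div_iff₀ (by positivity : (0:ℝ) < 2*δ)).mp hb
        linarith
      · push_neg; nlinarith
    · have hxnp : x ≤ 0 := le_trans hb (by linarith)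
      refine ⟨⟨?_, hyδ⟩, ?_⟩
      · rw [abs_of_nonpos hxnp]
        have ha' : -x ≤ y/(2*δ) := by linarith
        have := (le_div_iff₀ (by positivity : (0:ℝ) < 2*δ)).mp ha'
        linarith
      · push_neg; nlinarith

set_option maxHeartbeats 1000000 in
lemma integral_part (r δ : ℝ) (hδ : 0 < δ) (hδr : δ < r) (hr : r ≤ 1/2) :
    ∫ y in (2*δ*r/Real.sqrt (1+4*δ^2))..δ, (2*(y/(2*δ) - Real.sqrt (r^2 - y^2))) =
      1/2*δ - (δ*Real.sqrt (r^2 - δ^2) +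
        (Real.arcsin (δ/r) - Real.arctan (2*δ))*r^2) := by
  have hr0 : (0:ℝ) < r := hδ.trans hδr
  set s := Real.sqrt (1+4*δ^2) with hs_def
  have hs0 : 0 < s := Real.sqrt_pos.mpr (by positivity)
  have hs2 : s^2 = 1+4*δ^2 := Real.sq_sqrt (by positivity)
  have h2rs : 2*r ≤ s := by
    rw [hs_def, show (2*r : ℝ) = Real.sqrt ((2*r)^2) from (Real.sqrt_sq (by positivity)).symm]
    apply Real.sqrt_le_sqrt; nlinarith
  set y0 := 2*δ*r/s with hy0_def
  have hy00 : 0 < y0 := by positivity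
  have hy0δ : y0 ≤ δ := by
    rw [hy0_def, div_le_iff₀ hs0]; nlinarith
  have hy02 : y0^2 = 4*δ^2*r^2/s^2 := by rw [hy0_def]; ring
  have hFder : ∀ y ∈ Set.uIcc y0 δ, HasDerivAt
      (fun y => y^2/(2*δ) - (y*Real.sqrt (r^2-y^2) + r^2*Real.arcsin (y/r)))
      (2*(y/(2*δ) - Real.sqrt (r^2 - y^2))) y := by
    intro y hy
    rw [Set.uIcc_of_le hy0δ] at hy
    obtain ⟨hy1, hy2⟩ := hy
    have hypos : 0 < y := lt_of_lt_of_le hy00 hy1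
    have hyr : y < r := lt_of_le_of_lt hy2 hδr
    have hpos : 0 < r^2 - y^2 := by nlinarith
    have htpos : 0 < Real.sqrt (r^2 - y^2) := Real.sqrt_pos.mpr hpos
    have hsqsq : Real.sqrt (r^2-y^2)^2 = r^2 - y^2 := Real.sq_sqrt hpos.le
    have hd1 : HasDerivAt (fun y : ℝ => Real.sqrt (r^2 - y^2)) ((-2*y)/(2*Real.sqrt (r^2-y^2))) y := by
      have : HasDerivAt (fun y : ℝ => r^2 - y^2) (-2*y) y := by
        simpa using ((hasDerivAt_pow 2 y).const_sub (r^2))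
      exact this.sqrt hpos.ne'
    have hd2 : HasDerivAt (fun y : ℝ => y * Real.sqrt (r^2-y^2))
        (1 * Real.sqrt (r^2-y^2) + y * ((-2*y)/(2*Real.sqrt (r^2-y^2)))) y :=
      (hasDerivAt_id y).mul hd1
    have hne1 : y/r ≠ -1 := by
      intro h; rw [div_eq_iff hr0.ne'] at h; nlinarith
    have hne2 : y/r ≠ 1 := by
      intro h; rw [div_eq_iff hr0.ne'] at h; nlinarith
    have hd3 : HasDerivAt (fun y : ℝ => Real.arcsin (y/r))
        (1/Real.sqrt (1-(y/r)^2) * (1/r)) y :=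
      by have h := (Real.hasDerivAt_arcsin hne1 hne2).comp y ((hasDerivAt_id y).div_const r); exact h
    have hsd : Real.sqrt (1-(y/r)^2) = Real.sqrt (r^2-y^2) / r := by
      rw [show 1-(y/r)^2 = (r^2-y^2)/r^2 by field_simp,
        Real.sqrt_div hpos.le, Real.sqrt_sq hr0.le]
    have hd4 : HasDerivAt (fun y : ℝ => y^2/(2*δ)) (2*y/(2*δ)) y := by
      simpa using (hasDerivAt_pow 2 y).div_const (2*δ)
    have := hd4.sub (hd2.add ((hd3.const_mul (r^2))))
    refine this.congr_deriv ?_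
    symm
    rw [hsd, one_div_div]
    rw [show r^2 * (r / Real.sqrt (r^2-y^2) * (1/r)) = (r^2) / Real.sqrt (r^2-y^2) by
      field_simp]
    field_simp
    linear_combination (-δ) * hsqsq
  have hint : IntervalIntegrable (fun y => (2*(y/(2*δ) - Real.sqrt (r^2 - y^2)))) volume y0 δ := by
    apply Continuous.intervalIntegrable
    exact continuous_const.mul ((continuous_id.div_const (2*δ)).sub
      ((continuous_const.sub (continuous_pow 2)).sqrt))
  rw [intervalIntegral.integral_eq_sub_of_hasDerivAt hFder hint]
  have hry0 : r^2 - y0^2 = r^2/s^2 := by rw [hy02]; field_simp; nlinarith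
  have hsq1 : Real.sqrt (r^2 - y0^2) = r/s := by
    rw [hry0, Real.sqrt_div (by positivity), Real.sqrt_sq hr0.le, Real.sqrt_sq hs0.le]
  have harc : Real.arcsin (y0/r) = Real.arctan (2*δ) := by
    rw [Real.arctan_eq_arcsin]
    congr 1
    rw [hy0_def, show 1+(2*δ)^2 = 1+4*δ^2 by ring, ← hs_def]
    field_simp
  rw [hsq1, harc, hy02, hy0_def]
  field_simp
  ring

set_option maxHeartbeats 1000000 in
lemma volume_S (r δ : ℝ) (hδ : 0 < δ) (hδr : δ < r) (hr : r ≤ 1/2) :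
    volume {p : ℝ × ℝ | p.2 ∈ Icc (2*δ*r/Real.sqrt (1+4*δ^2)) δ ∧
        (p.1 ∈ Icc (Real.sqrt (r^2-p.2^2)) (p.2/(2*δ)) ∨
         p.1 ∈ Icc (-(p.2/(2*δ))) (-(Real.sqrt (r^2-p.2^2))))} =
      ENNReal.ofReal (∫ y in (2*δ*r/Real.sqrt (1+4*δ^2))..δ,
        (2*(y/(2*δ) - Real.sqrt (r^2 - y^2)))) := by
  have hr0 : (0:ℝ) < r := hδ.trans hδr
  have hs0 : 0 < Real.sqrt (1+4*δ^2) := Real.sqrt_pos.mpr (by positivity)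
  have hs2 : Real.sqrt (1+4*δ^2)^2 = 1+4*δ^2 := Real.sq_sqrt (by positivity)
  set s := Real.sqrt (1+4*δ^2) with hs_def
  set y0 := 2*δ*r/s with hy0_def
  have hy00 : 0 < y0 := by positivity
  have h2rs : 2*r ≤ s := by
    rw [hs_def, show (2*r : ℝ) = Real.sqrt ((2*r)^2) from (Real.sqrt_sq (by positivity)).symm]
    apply Real.sqrt_le_sqrt; nlinarith
  have hy0δ : y0 ≤ δ := by rw [hy0_def, div_le_iff₀ hs0]; nlinarith
  have hy02 : y0^2 * s^2 = 4*δ^2*r^2 := by rw [hy0_def]; field_simp; ring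
  have hfg : ∀ y ∈ Icc y0 δ, Real.sqrt (r^2-y^2) ≤ y/(2*δ) := by
    rintro y ⟨h1, h2⟩
    have hy0 : 0 ≤ y := le_trans hy00.le h1
    have hsq : y0^2 ≤ y^2 := by nlinarith
    apply Real.sqrt_le_iff.mpr
    refine ⟨by positivity, ?_⟩
    rw [div_pow]
    rw [le_div_iff₀ (by positivity)]
    nlinarith [hy02, hs2]
  have hfpos : ∀ y ∈ Icc y0 δ, 0 < Real.sqrt (r^2-y^2) := by
    rintro y ⟨h1, h2⟩
    exact Real.sqrt_pos.mpr (by nlinarith)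
  set f : ℝ → ℝ := fun y => Real.sqrt (r^2-y^2) with hf_def
  set g : ℝ → ℝ := fun y => y/(2*δ) with hg_def
  have hfc : Continuous f := (continuous_const.sub (continuous_pow 2)).sqrt
  have hgc : Continuous g := continuous_id.div_const (2*δ)
  have hS : MeasurableSet {p : ℝ × ℝ | p.2 ∈ Icc y0 δ ∧
      (p.1 ∈ Icc (f p.2) (g p.2) ∨ p.1 ∈ Icc (-(g p.2)) (-(f p.2)))} := by
    apply MeasurableSet.inter
    · exact measurable_snd measurableSet_Icc
    · apply MeasurableSet.union
      · exact MeasurableSet.inter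
          (measurableSet_le (hfc.comp continuous_snd).measurable measurable_fst)
          (measurableSet_le measurable_fst (hgc.comp continuous_snd).measurable)
      · exact MeasurableSet.inter
          (measurableSet_le (hgc.comp continuous_snd).neg.measurable measurable_fst)
          (measurableSet_le measurable_fst (hfc.comp continuous_snd).neg.measurable)
  rw [Measure.volume_eq_prod, Measure.prod_apply_symm hS]
  have hslice : ∀ y : ℝ, volume ((fun x => (x, y)) ⁻¹' {p : ℝ × ℝ | p.2 ∈ Icc y0 δ ∧
      (p.1 ∈ Icc (f p.2) (g p.2) ∨ p.1 ∈ Icc (-(g p.2)) (-(f p.2)))}) =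
      (Icc y0 δ).indicator (fun y => ENNReal.ofReal (2*(g y - f y))) y := by
    intro y
    rcases em (y ∈ Icc y0 δ) with hy | hy
    · rw [indicator_of_mem hy]
      have hpre : ((fun x => (x, y)) ⁻¹' {p : ℝ × ℝ | p.2 ∈ Icc y0 δ ∧
          (p.1 ∈ Icc (f p.2) (g p.2) ∨ p.1 ∈ Icc (-(g p.2)) (-(f p.2)))}) =
          Icc (f y) (g y) ∪ Icc (-(g y)) (-(f y)) := by
        ext x
        simp only [mem_preimage, mem_setOf_eq, mem_union]
        tauto
      rw [hpre]
      have hdisj : Disjoint (Icc (f y) (g y)) (Icc (-(g y)) (-(f y))) := by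
        apply Set.disjoint_left.mpr
        rintro x ⟨hx1, _⟩ ⟨_, hx4⟩
        have := hfpos y hy
        linarith
      rw [measure_union hdisj measurableSet_Icc]
      rw [Real.volume_Icc, Real.volume_Icc]
      rw [show -(f y) - -(g y) = g y - f y by ring]
      rw [← ENNReal.ofReal_add (by linarith [hfg y hy]) (by linarith [hfg y hy])]
      congr 1; ring
    · rw [indicator_of_notMem hy]
      have hpre : ((fun x => (x, y)) ⁻¹' {p : ℝ × ℝ | p.2 ∈ Icc y0 δ ∧
          (p.1 ∈ Icc (f p.2) (g p.2) ∨ p.1 ∈ Icc (-(g p.2)) (-(f p.2)))}) = ∅ := by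
        ext x
        simp only [mem_preimage, mem_setOf_eq, mem_empty_iff_false, iff_false]
        tauto
      rw [hpre]; simp
  simp_rw [hslice]
  rw [lintegral_indicator measurableSet_Icc]
  have hcont : Continuous (fun y => 2*(g y - f y)) :=
    continuous_const.mul (hgc.sub hfc)
  rw [← ofReal_integral_eq_lintegral_ofReal
    (hcont.continuousOn.integrableOn_Icc)
    ((ae_restrict_iff' measurableSet_Icc).mpr (ae_of_all _ fun y hy => by
      simp only [Pi.zero_apply]
      linarith [hfg y hy]))]
  rw [integral_Icc_eq_integral_Ioc, ← intervalIntegral.integral_of_le hy0δ]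

lemma ball_mem_iff (r : ℝ) (hr0 : 0 < r) (p : EuclideanSpace ℝ (Fin 2)) :
    p ∈ ball (0 : EuclideanSpace ℝ (Fin 2)) r ↔ (p 0)^2 + (p 1)^2 < r^2 := by
  rw [mem_ball, dist_eq_norm, sub_zero, EuclideanSpace.norm_eq,
    show ∑ i, ‖p i‖^2 = (p 0)^2 + (p 1)^2 by simp [Fin.sum_univ_two, sq_abs]]
  constructor
  · intro h
    nlinarith [Real.sq_sqrt (by positivity : (0:ℝ) ≤ (p 0)^2 + (p 1)^2),
      Real.sqrt_nonneg ((p 0)^2 + (p 1)^2)]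
  · intro h
    nlinarith [Real.sq_sqrt (by positivity : (0:ℝ) ≤ (p 0)^2 + (p 1)^2),
      Real.sqrt_nonneg ((p 0)^2 + (p 1)^2)]

lemma coord_measurePreserving :
    MeasurePreserving (fun p : EuclideanSpace ℝ (Fin 2) => (p 0, p 1)) volume volume := by
  have h1 := EuclideanSpace.volume_preserving_symm_measurableEquiv_toLp (Fin 2)
  have h2 := volume_preserving_finTwoArrow ℝ
  have : (fun p : EuclideanSpace ℝ (Fin 2) => (p 0, p 1)) =
      (MeasurableEquiv.finTwoArrow : (Fin 2 → ℝ) ≃ᵐ ℝ × ℝ) ∘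
        ((MeasurableEquiv.toLp 2 (Fin 2 → ℝ)).symm) := by
    funext p
    simp [MeasurableEquiv.finTwoArrow]
  rw [this]
  exact h2.comp h1

/-- Exact area of the part outside the open disk `B_r` of the isosceles triangle with apex
at the origin and unit base at distance `δ` from the origin. -/
theorem isosceles_exterior_area (r δ : ℝ) (hδ : 0 < δ) (hδr : δ < r) (hr : r ≤ 1 / 2) :
    volume ((convexHull ℝ {pt (-(1 / 2)) δ, pt (1 / 2) δ, (0 : EuclideanSpace ℝ (Fin 2))})
        \ ball 0 r) =
      ENNReal.ofReal (1 / 2 * δ -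
        (δ * Real.sqrt (r ^ 2 - δ ^ 2) +
          (Real.arcsin (δ / r) - Real.arctan (2 * δ)) * r ^ 2)) := by
  have hr' : r ≤ 1/2 := hr
  set S : Set (ℝ × ℝ) := {p : ℝ × ℝ | p.2 ∈ Icc (2*δ*r/Real.sqrt (1+4*δ^2)) δ ∧
      (p.1 ∈ Icc (Real.sqrt (r^2-p.2^2)) (p.2/(2*δ)) ∨
       p.1 ∈ Icc (-(p.2/(2*δ))) (-(Real.sqrt (r^2-p.2^2))))} with hS_def
  have hSm : MeasurableSet S := by
    have hfc : Continuous (fun y : ℝ => Real.sqrt (r^2-y^2)) :=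
      (continuous_const.sub (continuous_pow 2)).sqrt
    have hgc : Continuous (fun y : ℝ => y/(2*δ)) := continuous_id.div_const (2*δ)
    apply MeasurableSet.inter
    · exact measurable_snd measurableSet_Icc
    · apply MeasurableSet.union
      · exact MeasurableSet.inter
          (measurableSet_le (hfc.comp continuous_snd).measurable measurable_fst)
          (measurableSet_le measurable_fst (hgc.comp continuous_snd).measurable)
      · exact MeasurableSet.inter
          (measurableSet_le (hgc.comp continuous_snd).neg.measurable measurable_fst)
          (measurableSet_le measurable_fst (hfc.comp continuous_snd).neg.measurable)
  have hset : (convexHull ℝ {pt (-(1 / 2)) δ, pt (1 / 2) δ, (0 : EuclideanSpace ℝ (Fin 2))})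
        \ ball 0 r = (fun p : EuclideanSpace ℝ (Fin 2) => (p 0, p 1)) ⁻¹' S := by
    ext p
    rw [mem_diff, hull_eq δ hδ, mem_preimage, hS_def]
    simp only [mem_setOf_eq]
    rw [ball_mem_iff r (hδ.trans hδr)]
    exact pointwise_iff r δ (p 0) (p 1) hδ hδr hr'
  rw [hset, coord_measurePreserving.measure_preimage hSm.nullMeasurableSet]
  rw [hS_def]
  rw [volume_S r δ hδ hδr hr']
  rw [integral_part r δ hδ hδr hr']
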